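/- Fix a relaxation order d ≥ d_min for the CPOP. The sequence (ρ^ts_{d,k})_{k≥1} of optima of the term-sparsity-adapted complex moment relaxations is monotone nondecreasing in the sparse order k, and ρ^ts_{d,k} ≤ ρ_d for all k ≥ 1, where ρ_d is the optimum of the dense complex moment relaxation (Q_d). -/

import Mathlib

open scoped BigOperators ComplexOrder

attribute [local instance] Classical.propDecidable

noncomputable section

/-- Exponent tuples `ℕ^n`. -/
abbrev Exp (n : ℕ) := Fin n → ℕ

/-- A complex polynomial in `z, z̄` that is real-valued (Hermitian), represented by its
coefficients `f_{β,γ}` (of the monomial `z^β z̄^γ`). -/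
structure CPoly (n : ℕ) where
  coeff : Exp n × Exp n → ℂ
  finite_support : (Function.support coeff).Finite
  herm : ∀ p : Exp n × Exp n, coeff (p.2, p.1) = star (coeff p)

namespace CPoly

variable {n : ℕ}

/-- The support of a polynomial. -/
def supp (f : CPoly n) : Set (Exp n × Exp n) := Function.support f.coeff

/-- The (total) degree of a polynomial. -/
def deg (f : CPoly n) : ℕ :=
  sSup ((fun p : Exp n × Exp n => (∑ i, p.1 i) + ∑ i, p.2 i) '' f.supp)

/-- `⌈deg f / 2⌉`. -/
def halfDeg (f : CPoly n) : ℕ := (f.deg + 1) / 2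

/-- The constant polynomial `1`. -/
def one (n : ℕ) : CPoly n where
  coeff := fun p => if p = (0, 0) then 1 else 0
  finite_support := by
    apply Set.Finite.subset (Set.finite_singleton ((0, 0) : Exp n × Exp n))
    intro p hp
    by_contra hne
    simp only [Function.mem_support] at hp
    rw [if_neg (by simpa using hne)] at hp
    exact hp rfl
  herm := by
    rintro ⟨a, b⟩
    have hiff : (((b, a) : Exp n × Exp n) = (0, 0)) ↔ (((a, b) : Exp n × Exp n) = (0, 0)) := by
      constructor <;> · intro h; rw [Prod.ext_iff] at h ⊢; exact ⟨h.2, h.1⟩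
    show (if ((b, a) : Exp n × Exp n) = (0, 0) then (1 : ℂ) else 0)
      = star (if ((a, b) : Exp n × Exp n) = (0, 0) then (1 : ℂ) else 0)
    by_cases h : ((a, b) : Exp n × Exp n) = (0, 0)
    · rw [if_pos (hiff.mpr h), if_pos h]; simp
    · rw [if_neg (fun hc => h (hiff.mp hc)), if_neg h]; simp

end CPoly

/-- Hermitian (pseudo-)moment sequences: `y_{β,γ} = conj (y_{γ,β})`. -/
def IsHermSeq {n : ℕ} (y : Exp n × Exp n → ℂ) : Prop :=
  ∀ p : Exp n × Exp n, y (p.2, p.1) = star (y p)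

/-- The Riesz linear functional `L^c_y(f) = Σ f_{β,γ} y_{β,γ}`. -/
def Lc {n : ℕ} (f : CPoly n) (y : Exp n × Exp n → ℂ) : ℂ :=
  ∑ᶠ p : Exp n × Exp n, f.coeff p * y p

/-- The set `ℕ^n_d` of exponents of degree at most `d`. -/
def degSet (n d : ℕ) : Set (Exp n) := {β | ∑ i, β i ≤ d}

/-- Exponents of degree at most `d` supported on a subset `S` of variables. -/
def degSetI {n : ℕ} (d : ℕ) (S : Set (Fin n)) : Set (Exp n) :=
  {β | (∑ i, β i ≤ d) ∧ ∀ i, β i ≠ 0 → i ∈ S}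

lemma degSetI_finite {n : ℕ} (d : ℕ) (S : Set (Fin n)) : (degSetI d S).Finite := by
  apply Set.Finite.subset (Set.Finite.pi (t := fun _ : Fin n => Set.Iic d)
    (fun _ => Set.finite_Iic d))
  intro β hβ
  simp only [Set.mem_pi, Set.mem_univ, Set.mem_Iic, forall_true_left]
  intro i
  calc β i ≤ ∑ j, β j := Finset.single_le_sum (fun j _ => Nat.zero_le _) (Finset.mem_univ i)
    _ ≤ d := hβ.1

/-- The (finite) index type of a moment/localizing matrix: monomials `β ∈ ℕ^n_d`
supported on the variable set `S`. -/
def MIdx (n d : ℕ) (S : Set (Fin n)) : Type := ↥(degSetI (n := n) d S)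

noncomputable instance {n d : ℕ} {S : Set (Fin n)} : Fintype (MIdx n d S) :=
  (degSetI_finite d S).fintype

instance {n d : ℕ} {S : Set (Fin n)} : DecidableEq (MIdx n d S) :=
  fun a b => Classical.propDecidable _

/-- The complex moment (sub)matrix `M^c_d(y, S)`. -/
def momMat {n : ℕ} (d : ℕ) (S : Set (Fin n)) (y : Exp n × Exp n → ℂ) :
    Matrix (MIdx n d S) (MIdx n d S) ℂ :=
  fun β γ => y (β.1, γ.1)

/-- The complex localizing (sub)matrix `M^c_d(g y, S)`. -/
def locMat {n : ℕ} (g : CPoly n) (d : ℕ) (S : Set (Fin n)) (y : Exp n × Exp n → ℂ) :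
    Matrix (MIdx n d S) (MIdx n d S) ℂ :=
  fun β γ => ∑ᶠ p : Exp n × Exp n, g.coeff p * y (β.1 + p.1, γ.1 + p.2)

/-- The minimum relaxation order `d_min = max{⌈deg f/2⌉, d_1, …, d_m}`. -/
def dminOrd {n m : ℕ} (f : CPoly n) (g : Fin m → CPoly n) : ℕ :=
  max f.halfDeg (Finset.univ.sup fun j => (g j).halfDeg)

/-- Feasible set of the dense complex moment relaxation `(Q_d)`. -/
def denseFeas {n m : ℕ} (f : CPoly n) (g : Fin m → CPoly n) (d : ℕ) :
    Set (Exp n × Exp n → ℂ) :=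
  {y | IsHermSeq y ∧ y (0, 0) = 1 ∧ (momMat d Set.univ y).PosSemidef ∧
    ∀ j : Fin m, (locMat (g j) (d - (g j).halfDeg) Set.univ y).PosSemidef}

/-- `ρ_d`, the optimum of the dense relaxation `(Q_d)` (as an extended real). -/
def denseOpt {n m : ℕ} (f : CPoly n) (g : Fin m → CPoly n) (d : ℕ) : EReal :=
  sInf ((fun y => ((Lc f y).re : EReal)) '' denseFeas f g d)

/- ### Graphs, chordality, sparsity machinery -/

/-- A graph is chordal if every cycle of length at least four has a chord, i.e. an edge of the
graph joining two vertices of the cycle which is not an edge of the cycle. -/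
def IsChordal {V : Type*} (G : SimpleGraph V) : Prop :=
  ∀ ⦃v : V⦄ (w : G.Walk v v), w.IsCycle → 4 ≤ w.length →
    ∃ a b, a ∈ w.support ∧ b ∈ w.support ∧ G.Adj a b ∧ s(a, b) ∉ w.edges

/-- The maximal chordal extension: complete every connected component. -/
def maxChordalExt {V : Type*} (G : SimpleGraph V) : SimpleGraph V :=
  SimpleGraph.fromRel fun a b => G.Reachable a b

/-- The adjacency matrix `B_G` (restricted to the monomial index set `MIdx n d S`),
with ones on the diagonal. -/
def adjB {n : ℕ} (d : ℕ) (S : Set (Fin n)) (G : SimpleGraph (Exp n)) :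
    Matrix (MIdx n d S) (MIdx n d S) ℂ :=
  fun β γ => if β = γ ∨ G.Adj β.1 γ.1 then 1 else 0

/-- Membership in `Π_G(H_+)`: the matrix `M` coincides, on the diagonal and on the edges of
`G`, with some Hermitian positive semidefinite matrix (i.e. `M = Π_G(Q)` for PSD `Q`,
assuming `M` vanishes outside the pattern). -/
def inProjPSD {n : ℕ} (d : ℕ) (S : Set (Fin n)) (G : SimpleGraph (Exp n))
    (M : Matrix (MIdx n d S) (MIdx n d S) ℂ) : Prop :=
  ∃ Q : Matrix (MIdx n d S) (MIdx n d S) ℂ, Q.PosSemidef ∧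
    (fun β γ : MIdx n d S => if β = γ ∨ G.Adj β.1 γ.1 then Q β γ else 0) = M

/-- The `g`-support of a graph `G` with node set `V`:
`supp_g(G) = {(β+β', γ+γ') : β = γ ∈ V or {β,γ} ∈ E(G), (β',γ') ∈ supp(g)}`. -/
def gSupp {n : ℕ} (g : CPoly n) (V : Set (Exp n)) (G : SimpleGraph (Exp n)) :
    Set (Exp n × Exp n) :=
  {q | ∃ β γ p, ((β = γ ∧ β ∈ V) ∨ G.Adj β γ) ∧ p ∈ g.supp ∧ q = (β + p.1, γ + p.2)}

/-- The global support set `𝒜 = supp(f) ∪ ⋃_j supp(g_j)`. -/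
def suppA {n m : ℕ} (f : CPoly n) (g : Fin m → CPoly n) : Set (Exp n × Exp n) :=
  f.supp ∪ ⋃ j : Fin m, (g j).supp

/-- The term sparsity pattern graph on the node set `V` with edges `{β,γ}` for `(β,γ) ∈ A`. -/
def tspGraph {n : ℕ} (A : Set (Exp n × Exp n)) (V : Set (Exp n)) : SimpleGraph (Exp n) :=
  SimpleGraph.fromRel fun β γ => β ∈ V ∧ γ ∈ V ∧ (β, γ) ∈ A

/-- One step of the term sparsity iteration: the graph `F` on node set `V` with edges `{β,γ}`
such that `((β,γ)+supp(g)) ∩ C ≠ ∅`. -/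
def Fstep {n : ℕ} (g : CPoly n) (V : Set (Exp n)) (C : Set (Exp n × Exp n)) :
    SimpleGraph (Exp n) :=
  SimpleGraph.fromRel fun β γ => β ∈ V ∧ γ ∈ V ∧ ∃ p ∈ g.supp, (β + p.1, γ + p.2) ∈ C

/-- `g_0 = 1, g_1, …, g_m`. -/
def gext {n m : ℕ} (g : Fin m → CPoly n) : Fin (m + 1) → CPoly n :=
  Fin.cases (CPoly.one n) g

/-- `d_0 = 0, d_1, …, d_m`. -/
def dje {n m : ℕ} (g : Fin m → CPoly n) : Fin (m + 1) → ℕ :=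
  Fin.cases 0 fun j => (g j).halfDeg

/-- `⋃_{i=0}^m supp_{g_i}(G_i)` for a family of graphs. -/
def tsC {n m : ℕ} (g : Fin m → CPoly n) (d : ℕ)
    (GG : Fin (m + 1) → SimpleGraph (Exp n)) : Set (Exp n × Exp n) :=
  ⋃ i : Fin (m + 1), gSupp (gext g i) (degSet n (d - dje g i)) (GG i)

/-- The family of term sparsity graphs `G^(k)_{d,j}`, built with the chordal extension
operator `CE` (taking the node set and the graph to be extended). -/
def tsFam {n m : ℕ} (f : CPoly n) (g : Fin m → CPoly n)
    (CE : Set (Exp n) → SimpleGraph (Exp n) → SimpleGraph (Exp n)) (d : ℕ) :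
    ℕ → Fin (m + 1) → SimpleGraph (Exp n)
  | 0, j => if j = 0 then tspGraph (suppA f g) (degSet n d) else ⊥
  | k + 1, j =>
      CE (degSet n (d - dje g j))
        (Fstep (gext g j) (degSet n (d - dje g j)) (tsC g d (tsFam f g CE d k)))

/-- Feasible set of the TSSOS relaxation `(Q^ts_{d,k})`. -/
def tsFeas {n m : ℕ} (f : CPoly n) (g : Fin m → CPoly n)
    (CE : Set (Exp n) → SimpleGraph (Exp n) → SimpleGraph (Exp n)) (d k : ℕ) :
    Set (Exp n × Exp n → ℂ) :=
  {y | IsHermSeq y ∧ y (0, 0) = 1 ∧ ∀ j : Fin (m + 1),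
    inProjPSD (d - dje g j) Set.univ (tsFam f g CE d k j)
      (Matrix.hadamard (adjB (d - dje g j) Set.univ (tsFam f g CE d k j))
        (locMat (gext g j) (d - dje g j) Set.univ y))}

/-- `ρ^ts_{d,k}`, the optimum of `(Q^ts_{d,k})`. -/
def tsOpt {n m : ℕ} (f : CPoly n) (g : Fin m → CPoly n)
    (CE : Set (Exp n) → SimpleGraph (Exp n) → SimpleGraph (Exp n)) (d k : ℕ) : EReal :=
  sInf ((fun y => ((Lc f y).re : EReal)) '' tsFeas f g CE d k)

/- ### Sign symmetries -/

/-- The sign symmetries of a set `A ⊆ ℕ^n × ℕ^n`: binary vectors `r ∈ Z_2^n` with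
`rᵀ(β+γ) ≡ 0 (mod 2)` for all `(β,γ) ∈ A`. -/
def signSyms {n : ℕ} (A : Set (Exp n × Exp n)) : Set (Fin n → ZMod 2) :=
  {r | ∀ p ∈ A, ∑ i, r i * ((p.1 i + p.2 i : ℕ) : ZMod 2) = 0}

/- ### Correlative sparsity machinery -/

/-- The variables occurring in a polynomial: `⋃_{(β,γ) ∈ supp g} (supp β ∪ supp γ)`. -/
def varsOf {n : ℕ} (g : CPoly n) : Set (Fin n) :=
  {i | ∃ p ∈ g.supp, p.1 i ≠ 0 ∨ p.2 i ≠ 0}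

/-- The correlative sparsity pattern graph `G^csp` (at relaxation order `d`, with
`J' = {j : d_j = d}`). -/
def cspGraph {n m : ℕ} (f : CPoly n) (g : Fin m → CPoly n) (d : ℕ) : SimpleGraph (Fin n) :=
  SimpleGraph.fromRel fun i i' =>
    (∃ p, (p ∈ f.supp ∨ ∃ j : Fin m, (g j).halfDeg = d ∧ p ∈ (g j).supp) ∧
      (p.1 i ≠ 0 ∨ p.2 i ≠ 0) ∧ (p.1 i' ≠ 0 ∨ p.2 i' ≠ 0)) ∨
    (∃ k : Fin m, (g k).halfDeg ≠ d ∧ i ∈ varsOf (g k) ∧ i' ∈ varsOf (g k))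

/-- `s` is a maximal clique of `G`. -/
def IsMaxClique {V : Type*} (G : SimpleGraph V) (s : Set V) : Prop :=
  G.IsClique s ∧ ∀ t : Set V, G.IsClique t → s ⊆ t → s = t

/-- Feasible set of the correlative sparsity relaxation `(Q^cs_d)` with variable cliques
`I_1, …, I_p`, constraint groups `J_1, …, J_p` and scalarized constraints `J'`. -/
def csFeas {n m p : ℕ} (g : Fin m → CPoly n) (d : ℕ) (I : Fin p → Set (Fin n))
    (J : Fin p → Finset (Fin m)) (J' : Finset (Fin m)) : Set (Exp n × Exp n → ℂ) :=
  {y | IsHermSeq y ∧ y (0, 0) = 1 ∧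
    (∀ l : Fin p, (momMat d (I l) y).PosSemidef) ∧
    (∀ l : Fin p, ∀ j ∈ J l, (locMat (g j) (d - (g j).halfDeg) (I l) y).PosSemidef) ∧
    (∀ j ∈ J', 0 ≤ (Lc (g j) y).re)}

/-- `ρ^cs_d`, the optimum of `(Q^cs_d)`. -/
def csOpt {n m p : ℕ} (f : CPoly n) (g : Fin m → CPoly n) (d : ℕ) (I : Fin p → Set (Fin n))
    (J : Fin p → Finset (Fin m)) (J' : Finset (Fin m)) : EReal :=
  sInf ((fun y => ((Lc f y).re : EReal)) '' csFeas g d I J J')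

/- ### Combined correlative-term sparsity machinery -/

/-- `𝒜_l`: the elements of `A` supported on the variable clique `I_l`. -/
def AlocSet {n : ℕ} (A : Set (Exp n × Exp n)) (I : Set (Fin n)) : Set (Exp n × Exp n) :=
  {q ∈ A | (∀ i, q.1 i ≠ 0 → i ∈ I) ∧ ∀ i, q.2 i ≠ 0 → i ∈ I}

/-- `{0} ∪ J_l` inside `Fin (m+1)`. -/
def Jext {m : ℕ} (Jl : Finset (Fin m)) : Set (Fin (m + 1)) :=
  insert 0 (Fin.succ '' (Jl : Set (Fin m)))

/-- `𝒞^(k)_d = ⋃_l ⋃_{j ∈ {0} ∪ J_l} supp_{g_j}(G^(k)_{d,l,j})`. -/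
def cstsC {n m p : ℕ} (g : Fin m → CPoly n) (d : ℕ) (I : Fin p → Set (Fin n))
    (J : Fin p → Finset (Fin m)) (GG : Fin p → Fin (m + 1) → SimpleGraph (Exp n)) :
    Set (Exp n × Exp n) :=
  ⋃ l : Fin p, ⋃ j ∈ Jext (J l),
    gSupp (gext g j) (degSetI (d - dje g j) (I l)) (GG l j)

/-- The family of correlative-term sparsity graphs `G^(k)_{d,l,j}`, built with the chordal
extension operator `CE`. -/
def cstsFam {n m p : ℕ} (f : CPoly n) (g : Fin m → CPoly n)
    (CE : Set (Exp n) → SimpleGraph (Exp n) → SimpleGraph (Exp n))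
    (I : Fin p → Set (Fin n)) (J : Fin p → Finset (Fin m)) (d : ℕ) :
    ℕ → Fin p → Fin (m + 1) → SimpleGraph (Exp n)
  | 0, l, j => if j = 0 then tspGraph (AlocSet (suppA f g) (I l)) (degSetI d (I l)) else ⊥
  | k + 1, l, j =>
      CE (degSetI (d - dje g j) (I l))
        (Fstep (gext g j) (degSetI (d - dje g j) (I l))
          (cstsC g d I J (cstsFam f g CE I J d k)))

/-- Feasible set of the CS-TSSOS relaxation `(Q^cs-ts_{d,k})`. -/
def cstsFeas {n m p : ℕ} (f : CPoly n) (g : Fin m → CPoly n)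
    (CE : Set (Exp n) → SimpleGraph (Exp n) → SimpleGraph (Exp n))
    (I : Fin p → Set (Fin n)) (J : Fin p → Finset (Fin m)) (J' : Finset (Fin m))
    (d k : ℕ) : Set (Exp n × Exp n → ℂ) :=
  {y | IsHermSeq y ∧ y (0, 0) = 1 ∧
    (∀ l : Fin p, ∀ j ∈ Jext (J l),
      inProjPSD (d - dje g j) (I l) (cstsFam f g CE I J d k l j)
        (Matrix.hadamard (adjB (d - dje g j) (I l) (cstsFam f g CE I J d k l j))
          (locMat (gext g j) (d - dje g j) (I l) y))) ∧
    (∀ j ∈ J', 0 ≤ (Lc (g j) y).re)}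

/-- `ρ^cs-ts_{d,k}`, the optimum of `(Q^cs-ts_{d,k})`. -/
def cstsOpt {n m p : ℕ} (f : CPoly n) (g : Fin m → CPoly n)
    (CE : Set (Exp n) → SimpleGraph (Exp n) → SimpleGraph (Exp n))
    (I : Fin p → Set (Fin n)) (J : Fin p → Finset (Fin m)) (J' : Finset (Fin m))
    (d k : ℕ) : EReal :=
  sInf ((fun y => ((Lc f y).re : EReal)) '' cstsFeas f g CE I J J' d k)


section AuxTS

variable {n m : ℕ}

lemma one_mem_supp (n : ℕ) : ((0, 0) : Exp n × Exp n) ∈ (CPoly.one n).supp := by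
  simp [CPoly.supp, CPoly.one, Function.mem_support]

lemma gext_zero (g : Fin m → CPoly n) : gext g 0 = CPoly.one n := rfl

lemma dje_zero (g : Fin m → CPoly n) : dje g 0 = 0 := rfl

lemma locMat_one (e : ℕ) (S : Set (Fin n)) (y : Exp n × Exp n → ℂ) :
    locMat (CPoly.one n) e S y = momMat e S y := by
  funext β γ
  unfold locMat momMat
  rw [finsum_eq_single _ ((0, 0) : Exp n × Exp n) (fun p hp => by
    show (if p = (0, 0) then (1 : ℂ) else 0) * _ = 0
    rw [if_neg hp, zero_mul])]
  show (if ((0, 0) : Exp n × Exp n) = (0, 0) then (1 : ℂ) else 0) * _ = _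
  rw [if_pos rfl, one_mul]
  simp

lemma Fstep_empty {g : CPoly n} (hg : g.supp = ∅) (V : Set (Exp n))
    (C C' : Set (Exp n × Exp n)) : Fstep g V C = Fstep g V C' := by
  have h : ∀ p, p ∉ g.supp := by simp [hg]
  unfold Fstep
  congr 1
  funext a b
  refine propext ⟨?_, ?_⟩ <;> rintro ⟨h1, h2, p, hp, -⟩ <;> exact absurd hp (h p)

lemma tsFam_adj_mem (f : CPoly n) (g : Fin m → CPoly n)
    (CE : Set (Exp n) → SimpleGraph (Exp n) → SimpleGraph (Exp n))
    (hCE_supp : ∀ (V : Set (Exp n)) (G : SimpleGraph (Exp n)),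
      (∀ a b, G.Adj a b → a ∈ V ∧ b ∈ V) → ∀ a b, (CE V G).Adj a b → a ∈ V ∧ b ∈ V)
    (d k : ℕ) (j : Fin (m + 1)) :
    ∀ a b, (tsFam f g CE d k j).Adj a b →
      a ∈ degSet n (d - dje g j) ∧ b ∈ degSet n (d - dje g j) := by
  cases k with
  | zero =>
    by_cases hj : j = 0
    · subst hj
      intro a b hab
      have hab' : (tspGraph (suppA f g) (degSet n d)).Adj a b := by
        simpa [tsFam] using hab
      rw [tspGraph, SimpleGraph.fromRel_adj] at hab'
      replace hab := hab'
      rw [dje_zero, Nat.sub_zero]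
      rcases hab.2 with h | h
      · exact ⟨h.1, h.2.1⟩
      · exact ⟨h.2.1, h.1⟩
    · intro a b hab
      simp only [tsFam, if_neg hj] at hab
      exact absurd hab (by simp)
  | succ k =>
    intro a b hab
    simp only [tsFam] at hab
    refine hCE_supp _ _ ?_ a b hab
    intro a b hab
    rw [Fstep, SimpleGraph.fromRel_adj] at hab
    rcases hab.2 with h | h
    · exact ⟨h.1, h.2.1⟩
    · exact ⟨h.2.1, h.1⟩

lemma tsFam_mono (f : CPoly n) (g : Fin m → CPoly n)
    (CE : Set (Exp n) → SimpleGraph (Exp n) → SimpleGraph (Exp n))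
    (hCE_le : ∀ (V : Set (Exp n)) (G : SimpleGraph (Exp n)), G ≤ CE V G)
    (hCE_supp : ∀ (V : Set (Exp n)) (G : SimpleGraph (Exp n)),
      (∀ a b, G.Adj a b → a ∈ V ∧ b ∈ V) → ∀ a b, (CE V G).Adj a b → a ∈ V ∧ b ∈ V)
    (d k : ℕ) (j : Fin (m + 1)) :
    tsFam f g CE d k j ≤ tsFam f g CE d (k + 1) j := by
  by_cases hg : (gext g j).supp = ∅
  · cases k with
    | zero =>
      have hj : j ≠ 0 := by
        intro h
        subst h
        rw [gext_zero] at hg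
        have := one_mem_supp n
        rw [hg] at this
        exact this
      simp only [tsFam, if_neg hj]
      exact bot_le
    | succ k =>
      have heq : Fstep (gext g j) (degSet n (d - dje g j)) (tsC g d (tsFam f g CE d k))
          = Fstep (gext g j) (degSet n (d - dje g j))
              (tsC g d (tsFam f g CE d (k + 1))) := Fstep_empty hg _ _ _
      have e1 : tsFam f g CE d (k + 1) j = CE (degSet n (d - dje g j))
          (Fstep (gext g j) (degSet n (d - dje g j)) (tsC g d (tsFam f g CE d k))) := rfl
      have e2 : tsFam f g CE d (k + 1 + 1) j = CE (degSet n (d - dje g j))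
          (Fstep (gext g j) (degSet n (d - dje g j)) (tsC g d (tsFam f g CE d (k + 1)))) := rfl
      rw [e1, e2, heq]
  · obtain ⟨p, hp⟩ := Set.nonempty_iff_ne_empty.mpr hg
    intro a b hab
    have hmem := tsFam_adj_mem f g CE hCE_supp d k j a b hab
    have hF : (Fstep (gext g j) (degSet n (d - dje g j))
        (tsC g d (tsFam f g CE d k))).Adj a b := by
      rw [Fstep, SimpleGraph.fromRel_adj]
      refine ⟨hab.ne, Or.inl ⟨hmem.1, hmem.2, p, hp, ?_⟩⟩
      rw [tsC]
      exact Set.mem_iUnion.mpr ⟨j, ⟨a, b, p, Or.inr hab, hp, rfl⟩⟩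
    show (tsFam f g CE d (k + 1) j).Adj a b
    have e1 : tsFam f g CE d (k + 1) j = CE (degSet n (d - dje g j))
        (Fstep (gext g j) (degSet n (d - dje g j)) (tsC g d (tsFam f g CE d k))) := rfl
    rw [e1]
    exact hCE_le _ _ hF

lemma tsFeas_anti (f : CPoly n) (g : Fin m → CPoly n)
    (CE : Set (Exp n) → SimpleGraph (Exp n) → SimpleGraph (Exp n))
    (hCE_le : ∀ (V : Set (Exp n)) (G : SimpleGraph (Exp n)), G ≤ CE V G)
    (hCE_supp : ∀ (V : Set (Exp n)) (G : SimpleGraph (Exp n)),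
      (∀ a b, G.Adj a b → a ∈ V ∧ b ∈ V) → ∀ a b, (CE V G).Adj a b → a ∈ V ∧ b ∈ V)
    (d k : ℕ) :
    tsFeas f g CE d (k + 1) ⊆ tsFeas f g CE d k := by
  rintro y ⟨hherm, hy0, hpsd⟩
  refine ⟨hherm, hy0, fun j => ?_⟩
  obtain ⟨Q, hQpsd, hQeq⟩ := hpsd j
  refine ⟨Q, hQpsd, ?_⟩
  funext β γ
  have hmono := tsFam_mono f g CE hCE_le hCE_supp d k j
  have heq := congrFun (congrFun hQeq β) γ
  simp only [Matrix.hadamard_apply, adjB] at heq ⊢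
  by_cases hc : β = γ ∨ (tsFam f g CE d k j).Adj β.1 γ.1
  · have hc' : β = γ ∨ (tsFam f g CE d (k + 1) j).Adj β.1 γ.1 := by
      rcases hc with h | h
      · exact Or.inl h
      · exact Or.inr (hmono h)
    simp only [if_pos hc'] at heq
    rw [if_pos hc, if_pos hc]
    exact heq
  · rw [if_neg hc, if_neg hc, zero_mul]

lemma denseFeas_subset_tsFeas (f : CPoly n) (g : Fin m → CPoly n)
    (CE : Set (Exp n) → SimpleGraph (Exp n) → SimpleGraph (Exp n)) (d k : ℕ) :
    denseFeas f g d ⊆ tsFeas f g CE d k := by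
  rintro y ⟨hherm, hy0, hmom, hloc⟩
  refine ⟨hherm, hy0, fun j => ?_⟩
  refine ⟨locMat (gext g j) (d - dje g j) Set.univ y, ?_, ?_⟩
  · induction j using Fin.cases with
    | zero =>
      rw [gext_zero, dje_zero, Nat.sub_zero, locMat_one]
      exact hmom
    | succ i =>
      have h1 : gext g i.succ = g i := rfl
      have h2 : dje g i.succ = (g i).halfDeg := rfl
      rw [h1, h2]
      exact hloc i
  · funext β γ
    simp only [Matrix.hadamard_apply, adjB]
    by_cases hc : β = γ ∨ (tsFam f g CE d k j).Adj β.1 γ.1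
    · rw [if_pos hc, if_pos hc, one_mul]
    · rw [if_neg hc, if_neg hc, zero_mul]

end AuxTS

/-- **Theorem (TSSOS hierarchy, monotonicity in the sparse order).**
Fix a relaxation order `d ≥ d_min`. The sequence `(ρ^ts_(d,k))_(k ≥ 1)` is monotone
nondecreasing in `k`, and `ρ^ts_(d,k) ≤ ρ_d` for all `k ≥ 1`. -/
theorem ts_mono_sparse_order {n m : ℕ} (f : CPoly n) (g : Fin m → CPoly n)
    (CE : Set (Exp n) → SimpleGraph (Exp n) → SimpleGraph (Exp n))
    (hCE_le : ∀ (V : Set (Exp n)) (G : SimpleGraph (Exp n)), G ≤ CE V G)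
    (hCE_chordal : ∀ (V : Set (Exp n)) (G : SimpleGraph (Exp n)), IsChordal (CE V G))
    (hCE_supp : ∀ (V : Set (Exp n)) (G : SimpleGraph (Exp n)),
      (∀ a b, G.Adj a b → a ∈ V ∧ b ∈ V) → ∀ a b, (CE V G).Adj a b → a ∈ V ∧ b ∈ V)
    (d : ℕ) (hd : dminOrd f g ≤ d) :
    (∀ k : ℕ, 1 ≤ k → tsOpt f g CE d k ≤ tsOpt f g CE d (k + 1)) ∧
    (∀ k : ℕ, 1 ≤ k → tsOpt f g CE d k ≤ denseOpt f g d) := by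
  constructor
  · intro k _
    exact sInf_le_sInf (Set.image_mono (tsFeas_anti f g CE hCE_le hCE_supp d k))
  · intro k _
    exact sInf_le_sInf (Set.image_mono (denseFeas_subset_tsFeas f g CE d k))

end
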